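/- Let p be a prime and let G be a Camina group that is a p-group of order p^n with nilpotency class 2, and suppose the center Z(G) has order p^k. Then the dimension over ℂ of the Terwilliger algebra T(G) equals (p^{n−k} + p^k − 1)(p^{n−k} + p^k − 2) + p^n. -/

import Mathlib

open scoped Classical Pointwise

/-- The conjugacy class of `x` in `G`. -/
def conjClass {G : Type*} [Group G] (x : G) : Set G := {y | ∃ g : G, g * x * g⁻¹ = y}

/-- The adjacency matrix of a subset `C` of `G`. -/
noncomputable def adjMat (G : Type*) [Group G] (C : Set G) : Matrix G G ℂ :=
  Matrix.of fun x y => if y * x⁻¹ ∈ C then (1 : ℂ) else 0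

/-- The dual idempotent of a subset `C` of `G` (base point the identity). -/
noncomputable def dualIdem (G : Type*) [Group G] (C : Set G) : Matrix G G ℂ :=
  Matrix.of fun x y => if x = y ∧ y ∈ C then (1 : ℂ) else 0

/-- The Terwilliger algebra of the group association scheme of `G`, with base point `e`. -/
noncomputable def TerwAlg (G : Type*) [Group G] [Fintype G] [DecidableEq G] : Subalgebra ℂ (Matrix G G ℂ) :=
  Algebra.adjoin ℂ
    ((Set.range fun x : G => adjMat G (conjClass x)) ∪
     (Set.range fun x : G => dualIdem G (conjClass x)))

/-- A Camina group: a nonabelian group in which every conjugacy class outside the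
commutator subgroup is a coset of the commutator subgroup. -/
def IsCamina (G : Type*) [Group G] : Prop :=
  (¬ ∀ a b : G, a * b = b * a) ∧
  ∀ x : G, x ∉ commutator G → conjClass x = x • (commutator G : Set G)

/-- The action of the unit group of a field on (the multiplicative version of) its
additive group, by multiplication. -/
noncomputable def frobAct (F : Type*) [Field F] : Fˣ →* MulAut (Multiplicative F) where
  toFun u := AddEquiv.toMultiplicative (DistribMulAction.toAddAut Fˣ F u)
  map_one' := by ext x; simp [DistribMulAction.toAddAut]; rfl
  map_mul' u v := by ext x; simp [DistribMulAction.toAddAut, mul_smul]; rfl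


/-- The Frobenius group `F ⋊ Fˣ` for `F` the field with `p ^ r` elements. -/
abbrev FrobGrp (p r : ℕ) [Fact p.Prime] : Type :=
  Multiplicative (GaloisField p r) ⋊[frobAct (GaloisField p r)] (GaloisField p r)ˣ

/-! ### Auxiliary development -/

section Aux

variable {G : Type*} [Group G]

lemma mem_conjClass_self (x : G) : x ∈ conjClass x := ⟨1, by group⟩

lemma conjClass_eq_of_mem {x y : G} (h : y ∈ conjClass x) : conjClass y = conjClass x := by
  obtain ⟨g, rfl⟩ := h
  ext w
  constructor
  · rintro ⟨h, rfl⟩; exact ⟨h * g, by group⟩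
  · rintro ⟨h, rfl⟩; exact ⟨h * g⁻¹, by group⟩

lemma mem_conjClass_iff {x y : G} : y ∈ conjClass x ↔ conjClass y = conjClass x :=
  ⟨conjClass_eq_of_mem, fun h => h ▸ mem_conjClass_self y⟩

lemma central_comm {z : G} (hz : z ∈ Subgroup.center G) (a : G) : a * z = z * a :=
  Subgroup.mem_center_iff.mp hz a

lemma central_mul_comm {z : G} (hz : z ∈ Subgroup.center G) (a b : G) :
    a * z * b = a * b * z := by
  rw [mul_assoc, ← central_comm hz b, ← mul_assoc]

lemma conjClass_central {x : G} (hx : x ∈ Subgroup.center G) : conjClass x = {x} := by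
  ext w
  simp only [conjClass, Set.mem_setOf_eq, Set.mem_singleton_iff]
  constructor
  · rintro ⟨g, rfl⟩
    rw [central_comm hx g]; group
  · rintro rfl; exact ⟨1, by group⟩

lemma conjClass_one : conjClass (1 : G) = {1} := conjClass_central (Subgroup.center G).one_mem

lemma eq_of_class_eq {x y x' y' : G}
    (h3 : conjClass (y * x⁻¹) = conjClass (y' * x'⁻¹)) (hxy : x = y) : x' = y' := by
  subst hxy
  rw [mul_inv_cancel, conjClass_one] at h3
  have hm : y' * x'⁻¹ ∈ conjClass (y' * x'⁻¹) := mem_conjClass_self _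
  rw [← h3] at hm
  exact (mul_inv_eq_one.mp (Set.mem_singleton_iff.mp hm)).symm

lemma eq_iff_of_class_eq {x y x' y' : G}
    (h3 : conjClass (y * x⁻¹) = conjClass (y' * x'⁻¹)) : x = y ↔ x' = y' :=
  ⟨eq_of_class_eq h3, eq_of_class_eq h3.symm⟩

variable (hc : ∀ x : G, x ∉ Subgroup.center G →
    conjClass x = {w | w * x⁻¹ ∈ Subgroup.center G})

include hc in
/-- The key description of equality of conjugacy classes in a Camina group of class 2. -/
lemma classEq_iff (x x' : G) :
    conjClass x = conjClass x' ↔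
      x' * x⁻¹ ∈ Subgroup.center G ∧ (x ∈ Subgroup.center G → x = x') := by
  constructor
  · intro h
    by_cases hx : x ∈ Subgroup.center G
    · have hx' : x' ∈ conjClass x' := mem_conjClass_self x'
      rw [← h, conjClass_central hx] at hx'
      have : x' = x := hx'.out
      subst this
      exact ⟨by rw [mul_inv_cancel]; exact (Subgroup.center G).one_mem, fun _ => rfl⟩
    · by_cases hx' : x' ∈ Subgroup.center G
      · have hm : x ∈ conjClass x := mem_conjClass_self x
        rw [h, conjClass_central hx'] at hm
        exact absurd (hm.out ▸ hx') hx
      · have hm : x' ∈ conjClass x' := mem_conjClass_self x'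
        rw [← h, hc x hx] at hm
        exact ⟨hm, fun hx0 => absurd hx0 hx⟩
  · rintro ⟨h1, h2⟩
    by_cases hx : x ∈ Subgroup.center G
    · rw [h2 hx]
    · have hx' : x' ∉ Subgroup.center G := by
        intro hmem
        have : x = (x' * x⁻¹)⁻¹ * x' := by group
        rw [this] at hx
        exact hx (Subgroup.mul_mem _ (Subgroup.inv_mem _ h1) hmem)
      rw [hc x hx, hc x' hx']
      ext w
      simp only [Set.mem_setOf_eq]
      constructor
      · intro hw
        have e : w * x'⁻¹ = (w * x⁻¹) * (x' * x⁻¹)⁻¹ := by group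
        rw [e]; exact Subgroup.mul_mem _ hw (Subgroup.inv_mem _ h1)
      · intro hw
        have e : w * x⁻¹ = (w * x'⁻¹) * (x' * x⁻¹) := by group
        rw [e]; exact Subgroup.mul_mem _ hw h1

/-- An auxiliary permutation of `G` matching up the summation indices for two
pairs lying in the same "cell". -/
noncomputable def cellPerm (x y x' y' : G) : G → G := fun t =>
  if t * x⁻¹ ∈ Subgroup.center G then (if x ∈ Subgroup.center G then t else t * (x' * x⁻¹))
  else if y * t⁻¹ ∈ Subgroup.center G then (if y ∈ Subgroup.center G then t else t * (y' * y⁻¹))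
  else t

section CellPerm

variable {x y x' y' : G} (hα : x' * x⁻¹ ∈ Subgroup.center G) (hβ : y' * y⁻¹ ∈ Subgroup.center G)

include hα hβ in
lemma cellPerm_leftInv : ∀ t, cellPerm x' y' x y (cellPerm x y x' y' t) = t := by
  intro t
  have hZ := Subgroup.center G
  unfold cellPerm
  by_cases h1 : t * x⁻¹ ∈ Subgroup.center G
  · rw [if_pos h1]
    by_cases hx : x ∈ Subgroup.center G
    · have hx' : x' ∈ Subgroup.center G := by
        have : x' = (x' * x⁻¹) * x := by group
        rw [this]; exact Subgroup.mul_mem _ hα hx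
      rw [if_pos hx]
      have h1' : t * x'⁻¹ ∈ Subgroup.center G := by
        have : t * x'⁻¹ = (t * x⁻¹) * (x * x'⁻¹) := by group
        rw [this]
        exact Subgroup.mul_mem _ h1 (by simpa using Subgroup.inv_mem _ hα)
      rw [if_pos h1', if_pos hx']
    · have hx' : x' ∉ Subgroup.center G := by
        intro hmem
        have : x = (x' * x⁻¹)⁻¹ * x' := by group
        rw [this] at hx
        exact hx (Subgroup.mul_mem _ (Subgroup.inv_mem _ hα) hmem)
      rw [if_neg hx]
      have key : t * (x' * x⁻¹) * x'⁻¹ = t * x⁻¹ := by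
        calc t * (x' * x⁻¹) * x'⁻¹ = t * x'⁻¹ * (x' * x⁻¹) := central_mul_comm hα t x'⁻¹
          _ = t * x⁻¹ := by group
      have h1' : t * (x' * x⁻¹) * x'⁻¹ ∈ Subgroup.center G := by rw [key]; exact h1
      rw [if_pos h1', if_neg hx']
      calc t * (x' * x⁻¹) * (x * x'⁻¹) = t * (x * x'⁻¹) * (x' * x⁻¹) :=
            central_mul_comm hα t _
        _ = t := by group
  · rw [if_neg h1]
    by_cases h2 : y * t⁻¹ ∈ Subgroup.center G
    · rw [if_pos h2]
      by_cases hy : y ∈ Subgroup.center G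
      · have hy' : y' ∈ Subgroup.center G := by
          have : y' = (y' * y⁻¹) * y := by group
          rw [this]; exact Subgroup.mul_mem _ hβ hy
        rw [if_pos hy]
        have h1' : t * x'⁻¹ ∉ Subgroup.center G := by
          intro hmem
          have : t * x⁻¹ = (t * x'⁻¹) * (x' * x⁻¹) := by group
          rw [this] at h1
          exact h1 (Subgroup.mul_mem _ hmem hα)
        have h2' : y' * t⁻¹ ∈ Subgroup.center G := by
          have : y' * t⁻¹ = (y' * y⁻¹) * (y * t⁻¹) := by group
          rw [this]; exact Subgroup.mul_mem _ hβ h2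
        rw [if_neg h1', if_pos h2', if_pos hy']
      · have hy' : y' ∉ Subgroup.center G := by
          intro hmem
          have : y = (y' * y⁻¹)⁻¹ * y' := by group
          rw [this] at hy
          exact hy (Subgroup.mul_mem _ (Subgroup.inv_mem _ hβ) hmem)
        rw [if_neg hy]
        have h1' : t * (y' * y⁻¹) * x'⁻¹ ∉ Subgroup.center G := by
          intro hmem
          have : t * (y' * y⁻¹) * x'⁻¹ * (x' * x⁻¹) * (y' * y⁻¹)⁻¹ = t * x⁻¹ := by
            calc t * (y' * y⁻¹) * x'⁻¹ * (x' * x⁻¹) * (y' * y⁻¹)⁻¹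
                = t * x'⁻¹ * (y' * y⁻¹) * (x' * x⁻¹) * (y' * y⁻¹)⁻¹ := by
                  rw [central_mul_comm hβ t x'⁻¹]
              _ = t * x'⁻¹ * (x' * x⁻¹) * (y' * y⁻¹) * (y' * y⁻¹)⁻¹ := by
                  rw [central_mul_comm hβ (t * x'⁻¹) (x' * x⁻¹)]
              _ = t * x⁻¹ := by group
          rw [← this] at h1
          exact h1 (Subgroup.mul_mem _ (Subgroup.mul_mem _ hmem hα) (Subgroup.inv_mem _ hβ))
        rw [if_neg h1']
        have key : y' * (t * (y' * y⁻¹))⁻¹ = y * t⁻¹ := by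
          calc y' * (t * (y' * y⁻¹))⁻¹ = y' * (y' * y⁻¹)⁻¹ * t⁻¹ := by group
            _ = (y' * y⁻¹)⁻¹ * y' * t⁻¹ := by
                rw [central_comm (Subgroup.inv_mem _ hβ) y']
            _ = y * t⁻¹ := by group
        have h2' : y' * (t * (y' * y⁻¹))⁻¹ ∈ Subgroup.center G := by rw [key]; exact h2
        rw [if_pos h2', if_neg hy']
        calc t * (y' * y⁻¹) * (y * y'⁻¹) = t * (y * y'⁻¹) * (y' * y⁻¹) :=
              central_mul_comm hβ t _
          _ = t := by group
    · rw [if_neg h2]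
      have h1' : t * x'⁻¹ ∉ Subgroup.center G := by
        intro hmem
        have : t * x⁻¹ = (t * x'⁻¹) * (x' * x⁻¹) := by group
        rw [this] at h1
        exact h1 (Subgroup.mul_mem _ hmem hα)
      have h2' : y' * t⁻¹ ∉ Subgroup.center G := by
        intro hmem
        have : y * t⁻¹ = (y' * y⁻¹)⁻¹ * (y' * t⁻¹) := by group
        rw [this] at h2
        exact h2 (Subgroup.mul_mem _ (Subgroup.inv_mem _ hβ) hmem)
      rw [if_neg h1', if_neg h2']

include hα hβ in
lemma cellPerm_bijective : Function.Bijective (cellPerm x y x' y') := by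
  rw [Function.bijective_iff_has_inverse]
  refine ⟨cellPerm x' y' x y, cellPerm_leftInv hα hβ, cellPerm_leftInv ?_ ?_⟩
  · simpa using Subgroup.inv_mem _ hα
  · simpa using Subgroup.inv_mem _ hβ

end CellPerm

section QuotientHelpers

lemma mk_eq_mk_of {a b : G} (h : b * a⁻¹ ∈ Subgroup.center G) :
    (b : G ⧸ Subgroup.center G) = (a : G ⧸ Subgroup.center G) := by
  have h' : a * b⁻¹ ∈ Subgroup.center G := by simpa using Subgroup.inv_mem _ h
  have e : b⁻¹ * a = a * b⁻¹ := by
    calc b⁻¹ * a = b⁻¹ * (a * b⁻¹) * b := by group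
      _ = b⁻¹ * b * (a * b⁻¹) := central_mul_comm h' b⁻¹ b
      _ = a * b⁻¹ := by group
  rw [QuotientGroup.eq, e]
  exact h'

lemma memZ_of_mk_eq {a b : G} (h : (b : G ⧸ Subgroup.center G) = a) :
    b * a⁻¹ ∈ Subgroup.center G := by
  rw [QuotientGroup.eq] at h
  have h' : a⁻¹ * b ∈ Subgroup.center G := by simpa using Subgroup.inv_mem _ h
  have e : b * a⁻¹ = a⁻¹ * b := by
    calc b * a⁻¹ = b * (a⁻¹ * b) * b⁻¹ := by group
      _ = b * b⁻¹ * (a⁻¹ * b) := central_mul_comm h' b b⁻¹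
      _ = a⁻¹ * b := by group
  rw [e]
  exact h'

lemma memZ_wordt {ζ : G} (hζ : ζ ∈ Subgroup.center G) (t : G) :
    (t * ζ) * t⁻¹ ∈ Subgroup.center G := by
  rw [← QuotientGroup.eq_one_iff]
  have e2 : ((ζ : G ⧸ Subgroup.center G)) = 1 := (QuotientGroup.eq_one_iff ζ).mpr hζ
  simp only [QuotientGroup.mk_mul, QuotientGroup.mk_inv, e2]
  group

lemma memZ_wordx {x x' ζ : G} (hα : x' * x⁻¹ ∈ Subgroup.center G)
    (hζ : ζ ∈ Subgroup.center G) (t : G) :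
    (t * ζ * x'⁻¹) * (t * x⁻¹)⁻¹ ∈ Subgroup.center G := by
  rw [← QuotientGroup.eq_one_iff]
  have e1 : ((x' : G ⧸ Subgroup.center G)) = x := mk_eq_mk_of hα
  have e2 : ((ζ : G ⧸ Subgroup.center G)) = 1 := (QuotientGroup.eq_one_iff ζ).mpr hζ
  simp only [QuotientGroup.mk_mul, QuotientGroup.mk_inv, e1, e2]
  group

lemma memZ_wordy {y y' ζ : G} (hβ : y' * y⁻¹ ∈ Subgroup.center G)
    (hζ : ζ ∈ Subgroup.center G) (t : G) :
    (y' * (t * ζ)⁻¹) * (y * t⁻¹)⁻¹ ∈ Subgroup.center G := by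
  rw [← QuotientGroup.eq_one_iff]
  have e1 : ((y' : G ⧸ Subgroup.center G)) = y := mk_eq_mk_of hβ
  have e2 : ((ζ : G ⧸ Subgroup.center G)) = 1 := (QuotientGroup.eq_one_iff ζ).mpr hζ
  simp only [QuotientGroup.mk_mul, QuotientGroup.mk_inv, e1, e2]
  group

end QuotientHelpers

section WordKeys

lemma word_keyx {x x' : G} (hα : x' * x⁻¹ ∈ Subgroup.center G) (t : G) :
    t * (x' * x⁻¹) * x'⁻¹ = t * x⁻¹ := by
  calc t * (x' * x⁻¹) * x'⁻¹ = t * x'⁻¹ * (x' * x⁻¹) := central_mul_comm hα t x'⁻¹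
    _ = t * x⁻¹ := by group

lemma word_keyy {y y' : G} (hβ : y' * y⁻¹ ∈ Subgroup.center G) (t : G) :
    y' * (t * (y' * y⁻¹))⁻¹ = y * t⁻¹ := by
  calc y' * (t * (y' * y⁻¹))⁻¹ = y' * (y' * y⁻¹)⁻¹ * t⁻¹ := by group
    _ = (y' * y⁻¹)⁻¹ * y' * t⁻¹ := by rw [central_comm (Subgroup.inv_mem _ hβ) y']
    _ = y * t⁻¹ := by group

end WordKeys

section CellPermClasses

variable {x y x' y' : G}

include hc in
lemma cellPerm_class_t (hα : x' * x⁻¹ ∈ Subgroup.center G)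
    (hβ : y' * y⁻¹ ∈ Subgroup.center G) (t : G) :
    conjClass t = conjClass (cellPerm x y x' y' t) := by
  rw [classEq_iff hc]
  constructor
  · unfold cellPerm
    split_ifs with h1 hx h2 hy
    · simpa using (Subgroup.center G).one_mem
    · exact memZ_wordt hα t
    · simpa using (Subgroup.center G).one_mem
    · exact memZ_wordt hβ t
    · simpa using (Subgroup.center G).one_mem
  · intro ht
    unfold cellPerm
    by_cases h1 : t * x⁻¹ ∈ Subgroup.center G
    · have hx : x ∈ Subgroup.center G := by
        have e : x = (t * x⁻¹)⁻¹ * t := by group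
        rw [e]; exact Subgroup.mul_mem _ (Subgroup.inv_mem _ h1) ht
      rw [if_pos h1, if_pos hx]
    · rw [if_neg h1]
      by_cases h2 : y * t⁻¹ ∈ Subgroup.center G
      · have hy : y ∈ Subgroup.center G := by
          have e : y = (y * t⁻¹) * t := by group
          rw [e]; exact Subgroup.mul_mem _ h2 ht
        rw [if_pos h2, if_pos hy]
      · rw [if_neg h2]

include hc in
lemma cellPerm_class_x (hα : x' * x⁻¹ ∈ Subgroup.center G)
    (hβ : y' * y⁻¹ ∈ Subgroup.center G) (hxx : x ∈ Subgroup.center G → x = x') (t : G) :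
    conjClass (t * x⁻¹) = conjClass (cellPerm x y x' y' t * x'⁻¹) := by
  rw [classEq_iff hc]
  constructor
  · unfold cellPerm
    split_ifs with h1 hx h2 hy
    · simpa using memZ_wordx hα (Subgroup.center G).one_mem t
    · exact memZ_wordx hα hα t
    · simpa using memZ_wordx hα (Subgroup.center G).one_mem t
    · exact memZ_wordx hα hβ t
    · simpa using memZ_wordx hα (Subgroup.center G).one_mem t
  · intro h1
    unfold cellPerm
    rw [if_pos h1]
    by_cases hx : x ∈ Subgroup.center G
    · obtain rfl := hxx hx
      rw [if_pos hx]
    · rw [if_neg hx]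
      exact (word_keyx hα t).symm

include hc in
lemma cellPerm_class_y (hα : x' * x⁻¹ ∈ Subgroup.center G)
    (hβ : y' * y⁻¹ ∈ Subgroup.center G) (hyy : y ∈ Subgroup.center G → y = y')
    (h3 : conjClass (y * x⁻¹) = conjClass (y' * x'⁻¹)) (t : G) :
    conjClass (y * t⁻¹) = conjClass (y' * (cellPerm x y x' y' t)⁻¹) := by
  rw [classEq_iff hc]
  constructor
  · unfold cellPerm
    split_ifs with h1 hx h2 hy
    · simpa using memZ_wordy hβ (Subgroup.center G).one_mem t
    · exact memZ_wordy hβ hα t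
    · simpa using memZ_wordy hβ (Subgroup.center G).one_mem t
    · exact memZ_wordy hβ hβ t
    · simpa using memZ_wordy hβ (Subgroup.center G).one_mem t
  · intro h2
    unfold cellPerm
    by_cases h1 : t * x⁻¹ ∈ Subgroup.center G
    · rw [if_pos h1]
      by_cases hx : x ∈ Subgroup.center G
      · rw [if_pos hx]
        have ht : t ∈ Subgroup.center G := by
          have e : t = (t * x⁻¹) * x := by group
          rw [e]; exact Subgroup.mul_mem _ h1 hx
        have hy : y ∈ Subgroup.center G := by
          have e : y = (y * t⁻¹) * t := by group
          rw [e]; exact Subgroup.mul_mem _ h2 ht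
        rw [← hyy hy]
      · rw [if_neg hx]
        have hyx : y * x⁻¹ ∈ Subgroup.center G := by
          have e : y * x⁻¹ = (y * t⁻¹) * (t * x⁻¹) := by group
          rw [e]; exact Subgroup.mul_mem _ h2 h1
        obtain ⟨-, himp⟩ := (classEq_iff hc _ _).mp h3
        have e := himp hyx
        have e2 : y' = y * x⁻¹ * x' := by rw [e]; group
        have cxx : x' * x = x * x' := by
          calc x' * x = (x' * x⁻¹) * x * x := by group
            _ = x * (x' * x⁻¹) * x := by rw [← central_comm hα x]
            _ = x * x' := by group
        have hx2 : x' * (x' * x⁻¹)⁻¹ = x := by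
          calc x' * (x' * x⁻¹)⁻¹ = x' * x * x'⁻¹ := by group
            _ = x * x' * x'⁻¹ := by rw [cxx]
            _ = x := by group
        calc y * t⁻¹ = y * x⁻¹ * (x' * (x' * x⁻¹)⁻¹) * t⁻¹ := by rw [hx2]; group
          _ = y' * (t * (x' * x⁻¹))⁻¹ := by rw [e2]; group
    · rw [if_neg h1, if_pos h2]
      by_cases hy : y ∈ Subgroup.center G
      · rw [if_pos hy, ← hyy hy]
      · rw [if_neg hy]
        exact (word_keyy hβ t).symm

end CellPermClasses

/-- The property of a matrix being constant on the "cells" of the Terwilliger algebra. -/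
def IsCellConst (M : Matrix G G ℂ) : Prop :=
  ∀ x y x' y' : G, conjClass x = conjClass x' → conjClass y = conjClass y' →
    conjClass (y * x⁻¹) = conjClass (y' * x'⁻¹) → M x y = M x' y'

include hc in
lemma IsCellConst.mul [Fintype G] {M N : Matrix G G ℂ}
    (hM : IsCellConst M) (hN : IsCellConst N) : IsCellConst (M * N) := by
  intro x y x' y' h1 h2 h3
  obtain ⟨hα, hxx⟩ := (classEq_iff hc x x').mp h1
  obtain ⟨hβ, hyy⟩ := (classEq_iff hc y y').mp h2
  rw [Matrix.mul_apply, Matrix.mul_apply]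
  refine Fintype.sum_bijective (cellPerm x y x' y') (cellPerm_bijective hα hβ) _ _ ?_
  intro t
  exact congrArg₂ (· * ·)
    (hM x t x' (cellPerm x y x' y' t) h1 (cellPerm_class_t hc hα hβ t)
      (cellPerm_class_x hc hα hβ hxx t))
    (hN t y (cellPerm x y x' y' t) y' (cellPerm_class_t hc hα hβ t) h2
      (cellPerm_class_y hc hα hβ hyy h3 t))

lemma IsCellConst.one [DecidableEq G] : IsCellConst (1 : Matrix G G ℂ) := by
  intro x y x' y' _ _ h3
  by_cases h : x = y
  · rw [Matrix.one_apply, Matrix.one_apply, if_pos h, if_pos ((eq_iff_of_class_eq h3).mp h)]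
  · rw [Matrix.one_apply, Matrix.one_apply, if_neg h,
      if_neg (fun h' => h ((eq_iff_of_class_eq h3).mpr h'))]

lemma IsCellConst.add {M N : Matrix G G ℂ} (hM : IsCellConst M) (hN : IsCellConst N) :
    IsCellConst (M + N) := by
  intro x y x' y' h1 h2 h3
  simp only [Matrix.add_apply, hM x y x' y' h1 h2 h3, hN x y x' y' h1 h2 h3]

lemma IsCellConst.zero : IsCellConst (0 : Matrix G G ℂ) := fun _ _ _ _ _ _ _ => rfl

lemma IsCellConst.smul {M : Matrix G G ℂ} (c : ℂ) (hM : IsCellConst M) :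
    IsCellConst (c • M) := by
  intro x y x' y' h1 h2 h3
  simp only [Matrix.smul_apply, hM x y x' y' h1 h2 h3]

lemma IsCellConst.adjMat (w : G) : IsCellConst (adjMat G (conjClass w)) := by
  intro x y x' y' _ _ h3
  simp only [_root_.adjMat, Matrix.of_apply]
  congr 1
  simp only [eq_iff_iff, mem_conjClass_iff, h3]

lemma IsCellConst.dualIdem (w : G) : IsCellConst (dualIdem G (conjClass w)) := by
  intro x y x' y' _ h2 h3
  simp only [_root_.dualIdem, Matrix.of_apply]
  congr 1
  simp only [eq_iff_iff, mem_conjClass_iff, h2, eq_iff_of_class_eq h3]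

section CellAlgebra

variable (G)
variable [Fintype G] [DecidableEq G]

include hc in
/-- The subalgebra of cell-constant matrices. -/
noncomputable def cellAlg : Subalgebra ℂ (Matrix G G ℂ) where
  carrier := {M | IsCellConst M}
  mul_mem' := fun hm hn => IsCellConst.mul hc hm hn
  one_mem' := IsCellConst.one
  add_mem' := fun hm hn => IsCellConst.add hm hn
  zero_mem' := IsCellConst.zero
  algebraMap_mem' := fun c => by
    have : algebraMap ℂ (Matrix G G ℂ) c = c • (1 : Matrix G G ℂ) := by
      rw [Algebra.algebraMap_eq_smul_one]
    rw [this]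
    exact IsCellConst.smul c IsCellConst.one

end CellAlgebra
section Span

variable [Fintype G] [DecidableEq G]

lemma dualIdem_mul_apply (C : Set G) (N : Matrix G G ℂ) (u v : G) :
    (dualIdem G C * N) u v = if u ∈ C then N u v else 0 := by
  rw [Matrix.mul_apply, Finset.sum_eq_single u]
  · by_cases h : u ∈ C <;> simp [dualIdem, h]
  · intro b _ hb
    have : u ≠ b := fun h => hb h.symm
    simp [dualIdem, this]
  · intro h; exact absurd (Finset.mem_univ u) h

lemma mul_dualIdem_apply (C : Set G) (N : Matrix G G ℂ) (u v : G) :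
    (N * dualIdem G C) u v = if v ∈ C then N u v else 0 := by
  rw [Matrix.mul_apply, Finset.sum_eq_single v]
  · by_cases h : v ∈ C <;> simp [dualIdem, h]
  · intro b _ hb
    simp [dualIdem, hb]
  · intro h; exact absurd (Finset.mem_univ v) h

lemma cellMatrix_apply (x y u v : G) :
    (dualIdem G (conjClass x) *
        (adjMat G (conjClass (y * x⁻¹)) * dualIdem G (conjClass y))) u v
      = if conjClass u = conjClass x ∧ conjClass v = conjClass y ∧
            conjClass (v * u⁻¹) = conjClass (y * x⁻¹) then 1 else 0 := by
  rw [dualIdem_mul_apply, mul_dualIdem_apply]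
  simp only [adjMat, Matrix.of_apply, mem_conjClass_iff]
  by_cases h1 : conjClass u = conjClass x <;> by_cases h2 : conjClass v = conjClass y <;>
    by_cases h3 : conjClass (v * u⁻¹) = conjClass (y * x⁻¹) <;> simp [h1, h2, h3]

lemma cellMatrix_mem (x y : G) :
    dualIdem G (conjClass x) *
        (adjMat G (conjClass (y * x⁻¹)) * dualIdem G (conjClass y)) ∈ TerwAlg G :=
  mul_mem (Algebra.subset_adjoin (Or.inr ⟨x, rfl⟩))
    (mul_mem (Algebra.subset_adjoin (Or.inl ⟨y * x⁻¹, rfl⟩))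
      (Algebra.subset_adjoin (Or.inr ⟨y, rfl⟩)))

end Span

/-- The setoid whose classes are the cells. -/
def cellSetoid (G : Type*) [Group G] : Setoid (G × G) :=
  Setoid.ker (fun p : G × G => (conjClass p.1, conjClass p.2, conjClass (p.2 * p.1⁻¹)))

lemma cellSetoid_iff {a b : G × G} :
    cellSetoid G a b ↔ (conjClass a.1 = conjClass b.1 ∧ conjClass a.2 = conjClass b.2 ∧
      conjClass (a.2 * a.1⁻¹) = conjClass (b.2 * b.1⁻¹)) := by
  unfold cellSetoid
  rw [Setoid.ker_def]
  simp [Prod.ext_iff]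

section Span2

variable [Fintype G] [DecidableEq G]

lemma mem_terwAlg_of_isCellConst {M : Matrix G G ℂ} (hM : IsCellConst M) :
    M ∈ TerwAlg G := by
  haveI : Fintype (Quotient (cellSetoid G)) := Fintype.ofFinite _
  have key : M = ∑ q : Quotient (cellSetoid G),
      M q.out.1 q.out.2 •
        (dualIdem G (conjClass q.out.1) *
          (adjMat G (conjClass (q.out.2 * q.out.1⁻¹)) * dualIdem G (conjClass q.out.2))) := by
    ext u v
    rw [Matrix.sum_apply]
    simp only [Matrix.smul_apply, cellMatrix_apply, smul_eq_mul]
    rw [Finset.sum_eq_single (Quotient.mk (cellSetoid G) (u, v))]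
    · have hout := Quotient.mk_out (s := cellSetoid G) (u, v)
      rw [cellSetoid_iff] at hout
      obtain ⟨e1, e2, e3⟩ := hout
      rw [if_pos ⟨e1.symm, e2.symm, e3.symm⟩, mul_one]
      exact (hM _ _ u v e1 e2 e3).symm
    · rintro q _ hq
      rw [if_neg, mul_zero]
      rintro ⟨e1, e2, e3⟩
      apply hq
      rw [← Quotient.out_eq q]
      exact Quotient.sound (cellSetoid_iff.mpr ⟨e1.symm, e2.symm, e3.symm⟩)
    · intro h; exact absurd (Finset.mem_univ _) h
  rw [key]
  exact Subalgebra.sum_mem _ (fun q _ => Subalgebra.smul_mem _ (cellMatrix_mem _ _) _)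

include hc in
lemma terwAlg_eq_cellAlg : TerwAlg G = cellAlg G hc := by
  apply le_antisymm
  · apply Algebra.adjoin_le
    rintro M (⟨w, rfl⟩ | ⟨w, rfl⟩)
    · exact IsCellConst.adjMat w
    · exact IsCellConst.dualIdem w
  · intro M hM
    exact mem_terwAlg_of_isCellConst hM

include hc in
lemma finrank_cellAlg :
    Module.finrank ℂ (cellAlg G hc) = Nat.card (Quotient (cellSetoid G)) := by
  haveI : Fintype (Quotient (cellSetoid G)) := Fintype.ofFinite _
  have e : ↥(cellAlg G hc) ≃ₗ[ℂ] (Quotient (cellSetoid G) → ℂ) := by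
    refine
      { toFun := fun M q => (M : Matrix G G ℂ) q.out.1 q.out.2
        map_add' := fun M N => by funext q; simp
        map_smul' := fun c M => by funext q; simp
        invFun := fun f => ⟨Matrix.of fun u v => f (Quotient.mk (cellSetoid G) (u, v)), ?_⟩
        left_inv := ?_
        right_inv := ?_ }
    · intro x y x' y' h1 h2 h3
      exact congrArg f (Quotient.sound (cellSetoid_iff.mpr ⟨h1, h2, h3⟩))
    · intro M
      apply Subtype.ext
      ext u v
      have hout := Quotient.mk_out (s := cellSetoid G) (u, v)
      rw [cellSetoid_iff] at hout
      obtain ⟨e1, e2, e3⟩ := hout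
      exact M.2 _ _ u v e1 e2 e3
    · intro f
      funext q
      simp [Quotient.out_eq]
  rw [e.finrank_eq, Module.finrank_pi, Nat.card_eq_fintype_card]

end Span2

section Counting

lemma memZ_iff_of {a b : G} (h : b * a⁻¹ ∈ Subgroup.center G) :
    a ∈ Subgroup.center G ↔ b ∈ Subgroup.center G := by
  constructor
  · intro ha
    have e : b = (b * a⁻¹) * a := by group
    rw [e]; exact Subgroup.mul_mem _ h ha
  · intro hb
    have e : a = (b * a⁻¹)⁻¹ * b := by group
    rw [e]; exact Subgroup.mul_mem _ (Subgroup.inv_mem _ h) hb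

variable (G) in
/-- The index type for the cells. -/
abbrev cellType : Type _ :=
  (↥(Subgroup.center G) × ↥(Subgroup.center G)) ⊕
  ((↥(Subgroup.center G) × {a : G ⧸ Subgroup.center G // a ≠ 1}) ⊕
  (({a : G ⧸ Subgroup.center G // a ≠ 1} × ↥(Subgroup.center G)) ⊕
  (({p : {a : G ⧸ Subgroup.center G // a ≠ 1} × {a : G ⧸ Subgroup.center G // a ≠ 1} // p.1 ≠ p.2}) ⊕
  ({a : G ⧸ Subgroup.center G // a ≠ 1} × ↥(Subgroup.center G)))))

variable (G) in
/-- The complete invariant of a pair, landing in the cell index type. -/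
noncomputable def cellInv (p : G × G) : cellType G :=
  if hx : p.1 ∈ Subgroup.center G then
    if hy : p.2 ∈ Subgroup.center G then
      Sum.inl (⟨p.1, hx⟩, ⟨p.2, hy⟩)
    else
      Sum.inr (Sum.inl (⟨p.1, hx⟩, ⟨(p.2 : G ⧸ Subgroup.center G),
        fun h => hy ((QuotientGroup.eq_one_iff p.2).mp h)⟩))
  else
    if hy : p.2 ∈ Subgroup.center G then
      Sum.inr (Sum.inr (Sum.inl (⟨(p.1 : G ⧸ Subgroup.center G),
        fun h => hx ((QuotientGroup.eq_one_iff p.1).mp h)⟩, ⟨p.2, hy⟩)))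
    else
      if hxy : (p.1 : G ⧸ Subgroup.center G) = (p.2 : G ⧸ Subgroup.center G) then
        Sum.inr (Sum.inr (Sum.inr (Sum.inr (⟨(p.1 : G ⧸ Subgroup.center G),
          fun h => hx ((QuotientGroup.eq_one_iff p.1).mp h)⟩,
          ⟨p.2 * p.1⁻¹, memZ_of_mk_eq hxy.symm⟩))))
      else
        Sum.inr (Sum.inr (Sum.inr (Sum.inl
          ⟨(⟨(p.1 : G ⧸ Subgroup.center G), fun h => hx ((QuotientGroup.eq_one_iff p.1).mp h)⟩,
            ⟨(p.2 : G ⧸ Subgroup.center G), fun h => hy ((QuotientGroup.eq_one_iff p.2).mp h)⟩),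
            fun h => hxy (congrArg Subtype.val h)⟩)))

include hc in
lemma cellInv_sound : ∀ a b : G × G, cellSetoid G a b → cellInv G a = cellInv G b := by
  intro a b h
  rw [cellSetoid_iff] at h
  obtain ⟨h1, h2, h3⟩ := h
  obtain ⟨hα, hxx⟩ := (classEq_iff hc _ _).mp h1
  obtain ⟨hβ, hyy⟩ := (classEq_iff hc _ _).mp h2
  have hxZ := memZ_iff_of hα
  have hyZ := memZ_iff_of hβ
  have ex : ((b.1 : G ⧸ Subgroup.center G)) = a.1 := mk_eq_mk_of hα
  have ey : ((b.2 : G ⧸ Subgroup.center G)) = a.2 := mk_eq_mk_of hβ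
  unfold cellInv
  by_cases hx : a.1 ∈ Subgroup.center G
  · have hx' : b.1 ∈ Subgroup.center G := hxZ.mp hx
    rw [dif_pos hx, dif_pos hx']
    have exx : a.1 = b.1 := hxx hx
    by_cases hy : a.2 ∈ Subgroup.center G
    · have hy' : b.2 ∈ Subgroup.center G := hyZ.mp hy
      rw [dif_pos hy, dif_pos hy']
      have eyy : a.2 = b.2 := hyy hy
      simp only [Sum.inl.injEq, Prod.mk.injEq, Subtype.mk.injEq]
      exact ⟨exx, eyy⟩
    · have hy' : b.2 ∉ Subgroup.center G := fun h => hy (hyZ.mpr h)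
      rw [dif_neg hy, dif_neg hy']
      simp only [Sum.inr.injEq, Sum.inl.injEq, Prod.mk.injEq, Subtype.mk.injEq]
      exact ⟨exx, ey.symm⟩
  · have hx' : b.1 ∉ Subgroup.center G := fun h => hx (hxZ.mpr h)
    rw [dif_neg hx, dif_neg hx']
    by_cases hy : a.2 ∈ Subgroup.center G
    · have hy' : b.2 ∈ Subgroup.center G := hyZ.mp hy
      rw [dif_pos hy, dif_pos hy']
      simp only [Sum.inr.injEq, Sum.inl.injEq, Prod.mk.injEq, Subtype.mk.injEq]
      exact ⟨ex.symm, hyy hy⟩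
    · have hy' : b.2 ∉ Subgroup.center G := fun h => hy (hyZ.mpr h)
      rw [dif_neg hy, dif_neg hy']
      by_cases hxy : ((a.1 : G ⧸ Subgroup.center G)) = (a.2 : G ⧸ Subgroup.center G)
      · have hxy' : ((b.1 : G ⧸ Subgroup.center G)) = (b.2 : G ⧸ Subgroup.center G) := by
          rw [ex, ey]; exact hxy
        rw [dif_pos hxy, dif_pos hxy']
        obtain ⟨-, himp⟩ := (classEq_iff hc _ _).mp h3
        have hyx : a.2 * a.1⁻¹ ∈ Subgroup.center G := memZ_of_mk_eq hxy.symm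
        simp only [Sum.inr.injEq, Prod.mk.injEq, Subtype.mk.injEq]
        exact ⟨ex.symm, himp hyx⟩
      · have hxy' : ¬ ((b.1 : G ⧸ Subgroup.center G)) = (b.2 : G ⧸ Subgroup.center G) := by
          rw [ex, ey]; exact hxy
        rw [dif_neg hxy, dif_neg hxy']
        simp only [Sum.inr.injEq, Sum.inl.injEq, Subtype.mk.injEq, Prod.mk.injEq]
        exact ⟨ex.symm, ey.symm⟩

include hc in
lemma cellInv_inj : ∀ a b : G × G, cellInv G a = cellInv G b → cellSetoid G a b := by
  intro a b h
  rw [cellSetoid_iff]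
  unfold cellInv at h
  split_ifs at h with c1 c2 c3 c4 c5 c6 <;> simp only [Sum.inl.injEq, Sum.inr.injEq,
    Prod.mk.injEq, Subtype.mk.injEq, reduceCtorEq] at h
  -- five surviving cases
  · obtain ⟨e1, e2⟩ := h
    rw [e1, e2]
    exact ⟨rfl, rfl, rfl⟩
  · -- first coordinates central and equal, second in the same nontrivial coset
    obtain ⟨e1, e2⟩ := h
    have ha1 : a.1 ∈ Subgroup.center G := by assumption
    have ha2 : a.2 ∉ Subgroup.center G := by assumption
    have hβ : b.2 * a.2⁻¹ ∈ Subgroup.center G := memZ_of_mk_eq e2.symm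
    refine ⟨by rw [e1], (classEq_iff hc _ _).mpr ⟨hβ, fun hm => absurd hm ha2⟩,
      (classEq_iff hc _ _).mpr ⟨?_, fun hm => ?_⟩⟩
    · rw [← QuotientGroup.eq_one_iff]
      have q1 : ((a.1 : G ⧸ Subgroup.center G)) = b.1 := congrArg _ e1
      have q2 : ((a.2 : G ⧸ Subgroup.center G)) = b.2 := e2
      simp only [QuotientGroup.mk_mul, QuotientGroup.mk_inv, ← q1, ← q2]
      group
    · exact absurd (by
        have e : a.2 = (a.2 * a.1⁻¹) * a.1 := by group
        rw [e]; exact Subgroup.mul_mem _ hm ha1) ha2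
  · -- second coordinates central and equal
    obtain ⟨e1, e2⟩ := h
    have ha1 : a.1 ∉ Subgroup.center G := by assumption
    have ha2 : a.2 ∈ Subgroup.center G := by assumption
    have hα : b.1 * a.1⁻¹ ∈ Subgroup.center G := memZ_of_mk_eq e1.symm
    refine ⟨(classEq_iff hc _ _).mpr ⟨hα, fun hm => absurd hm ha1⟩, by rw [e2],
      (classEq_iff hc _ _).mpr ⟨?_, fun hm => ?_⟩⟩
    · rw [← QuotientGroup.eq_one_iff]
      have q2 : ((a.2 : G ⧸ Subgroup.center G)) = b.2 := congrArg _ e2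
      simp only [QuotientGroup.mk_mul, QuotientGroup.mk_inv, ← e1, ← q2]
      group
    · exact absurd (by
        have e : a.1 = (a.2 * a.1⁻¹)⁻¹ * a.2 := by group
        rw [e]; exact Subgroup.mul_mem _ (Subgroup.inv_mem _ hm) ha2) ha1
  · -- both noncentral, same coset on each side
    obtain ⟨e1, e4⟩ := h
    have ha1 : a.1 ∉ Subgroup.center G := by assumption
    have ha2 : a.2 ∉ Subgroup.center G := by assumption
    have hα : b.1 * a.1⁻¹ ∈ Subgroup.center G := memZ_of_mk_eq e1.symm
    have q4 : ((a.2 : G ⧸ Subgroup.center G)) * ((a.1 : G ⧸ Subgroup.center G))⁻¹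
        = ((b.2 : G ⧸ Subgroup.center G)) * ((b.1 : G ⧸ Subgroup.center G))⁻¹ := by
      have := congrArg (QuotientGroup.mk (s := Subgroup.center G)) e4
      simpa only [QuotientGroup.mk_mul, QuotientGroup.mk_inv] using this
    have q2 : ((a.2 : G ⧸ Subgroup.center G)) = b.2 := by
      have e : ((a.2 : G ⧸ Subgroup.center G))
          = ((b.2 : G ⧸ Subgroup.center G)) * ((b.1 : G ⧸ Subgroup.center G))⁻¹
            * ((a.1 : G ⧸ Subgroup.center G)) := by rw [← q4]; group
      rw [e, e1]; group
    refine ⟨(classEq_iff hc _ _).mpr ⟨hα, fun hm => absurd hm ha1⟩,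
      (classEq_iff hc _ _).mpr ⟨memZ_of_mk_eq q2.symm, fun hm => absurd hm ha2⟩,
      by rw [e4]⟩
  · -- both noncentral, different cosets on each side
    obtain ⟨e1, e2⟩ := h
    have ha1 : a.1 ∉ Subgroup.center G := by assumption
    have ha2 : a.2 ∉ Subgroup.center G := by assumption
    have hne : ¬((a.1 : G ⧸ Subgroup.center G)) = ((a.2 : G ⧸ Subgroup.center G)) := by
      assumption
    refine ⟨(classEq_iff hc _ _).mpr ⟨memZ_of_mk_eq e1.symm, fun hm => absurd hm ha1⟩,
      (classEq_iff hc _ _).mpr ⟨memZ_of_mk_eq e2.symm, fun hm => absurd hm ha2⟩,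
      (classEq_iff hc _ _).mpr ⟨?_, fun hm => ?_⟩⟩
    · rw [← QuotientGroup.eq_one_iff]
      simp only [QuotientGroup.mk_mul, QuotientGroup.mk_inv, ← e1, ← e2]
      group
    · exact absurd (mk_eq_mk_of hm) (fun q => hne q.symm)

lemma cellInv_surj : Function.Surjective (cellInv G) := by
  rintro (⟨z, w⟩ | ⟨z, b⟩ | ⟨b, z⟩ | ⟨⟨a', b'⟩, hab⟩ | ⟨a', z⟩)
  · refine ⟨(z.1, w.1), ?_⟩
    unfold cellInv
    rw [dif_pos z.2, dif_pos w.2]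
  · obtain ⟨y, hy⟩ := QuotientGroup.mk_surjective b.1
    have hyZ : y ∉ Subgroup.center G := by
      intro hm
      exact b.2 (by rw [← hy, QuotientGroup.eq_one_iff]; exact hm)
    refine ⟨(z.1, y), ?_⟩
    unfold cellInv
    rw [dif_pos z.2, dif_neg hyZ]
    exact congrArg (fun t => Sum.inr (Sum.inl t))
      (Prod.ext (Subtype.ext rfl) (Subtype.ext hy))
  · obtain ⟨x, hx⟩ := QuotientGroup.mk_surjective b.1
    have hxZ : x ∉ Subgroup.center G := by
      intro hm
      exact b.2 (by rw [← hx, QuotientGroup.eq_one_iff]; exact hm)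
    refine ⟨(x, z.1), ?_⟩
    unfold cellInv
    rw [dif_neg hxZ, dif_pos z.2]
    exact congrArg (fun t => Sum.inr (Sum.inr (Sum.inl t)))
      (Prod.ext (Subtype.ext hx) (Subtype.ext rfl))
  · obtain ⟨x, hx⟩ := QuotientGroup.mk_surjective a'.1
    obtain ⟨y, hy⟩ := QuotientGroup.mk_surjective b'.1
    have hxZ : x ∉ Subgroup.center G := by
      intro hm
      exact a'.2 (by rw [← hx, QuotientGroup.eq_one_iff]; exact hm)
    have hyZ : y ∉ Subgroup.center G := by
      intro hm
      exact b'.2 (by rw [← hy, QuotientGroup.eq_one_iff]; exact hm)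
    have hne : ¬((x : G ⧸ Subgroup.center G)) = ((y : G ⧸ Subgroup.center G)) := by
      rw [hx, hy]
      exact fun q => hab (Subtype.ext q)
    refine ⟨(x, y), ?_⟩
    unfold cellInv
    rw [dif_neg hxZ, dif_neg hyZ, dif_neg hne]
    exact congrArg (fun t => Sum.inr (Sum.inr (Sum.inr (Sum.inl t))))
      (Subtype.ext (Prod.ext (Subtype.ext hx) (Subtype.ext hy)))
  · obtain ⟨x, hx⟩ := QuotientGroup.mk_surjective a'.1
    have hxZ : x ∉ Subgroup.center G := by
      intro hm
      exact a'.2 (by rw [← hx, QuotientGroup.eq_one_iff]; exact hm)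
    have hyZ : z.1 * x ∉ Subgroup.center G := fun hm => hxZ (by
      have e : x = (z.1)⁻¹ * (z.1 * x) := by group
      rw [e]; exact Subgroup.mul_mem _ (Subgroup.inv_mem _ z.2) hm)
    have hq : ((z.1 * x : G) : G ⧸ Subgroup.center G) = (x : G ⧸ Subgroup.center G) := by
      rw [QuotientGroup.mk_mul, (QuotientGroup.eq_one_iff z.1).mpr z.2, one_mul]
    refine ⟨(x, z.1 * x), ?_⟩
    unfold cellInv
    rw [dif_neg hxZ, dif_neg hyZ, dif_pos hq.symm]
    exact congrArg (fun t => Sum.inr (Sum.inr (Sum.inr (Sum.inr t))))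
      (Prod.ext (Subtype.ext hx) (Subtype.ext (by group)))

include hc in
lemma card_quotient_eq_card_cellType :
    Nat.card (Quotient (cellSetoid G)) = Nat.card (cellType G) := by
  refine Nat.card_eq_of_bijective (Quotient.lift (cellInv G) (cellInv_sound hc)) ⟨?_, ?_⟩
  · intro q1 q2
    induction q1 using Quotient.ind
    induction q2 using Quotient.ind
    intro h
    exact Quotient.sound (cellInv_inj hc _ _ h)
  · intro e
    obtain ⟨p, hp⟩ := cellInv_surj e
    exact ⟨Quotient.mk _ p, hp⟩

end Counting
end Aux

section CardLemmas

lemma card_ne_subtype (A : Type*) [Finite A] :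
    Nat.card {p : A × A // p.1 ≠ p.2} + Nat.card A = Nat.card A * Nat.card A := by
  classical
  have e1 : Nat.card {p : A × A // p.1 = p.2} = Nat.card A := by
    refine Nat.card_congr ⟨fun p => p.1.1, fun a => ⟨(a, a), rfl⟩, ?_, fun a => rfl⟩
    rintro ⟨⟨a, b⟩, h⟩
    cases h
    rfl
  have e2 : Nat.card ({p : A × A // p.1 = p.2} ⊕ {p : A × A // p.1 ≠ p.2})
      = Nat.card (A × A) := Nat.card_congr (Equiv.sumCompl _)
  rw [Nat.card_sum, e1, Nat.card_prod] at e2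
  omega

lemma card_ne_one (A : Type*) [One A] [Finite A] :
    Nat.card {a : A // a ≠ 1} + 1 = Nat.card A := by
  classical
  have e1 : Nat.card {a : A // a = 1} = 1 := by
    refine Nat.card_eq_one_iff_unique.mpr ⟨⟨?_⟩, ⟨⟨1, rfl⟩⟩⟩
    rintro ⟨a, rfl⟩ ⟨b, hb⟩
    exact (Subtype.ext hb).symm
  have e2 : Nat.card ({a : A // a = 1} ⊕ {a : A // a ≠ 1}) = Nat.card A :=
    Nat.card_congr (Equiv.sumCompl _)
  rw [Nat.card_sum, e1] at e2
  omega

lemma final_arith (s m D : ℕ) (hD : D + m = m * m) (hs : 1 ≤ s) :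
    s * s + (s * m + (m * s + (D + m * s)))
      = (m + 1 + s - 1) * (m + 1 + s - 2) + (m + 1) * s := by
  obtain ⟨S, rfl⟩ := Nat.exists_eq_add_of_le hs
  have e1 : m + 1 + (1 + S) - 1 = m + S + 1 := by omega
  have e2 : m + 1 + (1 + S) - 2 = m + S := by omega
  rw [e1, e2]
  cases m with
  | zero =>
    have hD0 : D = 0 := by simpa using hD
    subst hD0
    ring
  | succ M =>
    have e : (M + 1) * (M + 1) = (M + 1) * M + (M + 1) := by ring
    have hD' : D = (M + 1) * M := Nat.add_right_cancel (hD.trans e)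
    subst hD'
    ring

end CardLemmas

open scoped commutatorElement

/-- Theorem 4.5: the dimension of the Terwilliger algebra of a Camina `p`-group of order
`p^n` with nilpotency class `2` and center of order `p^k`. -/
theorem stmt6 (p n k : ℕ) (hp : p.Prime) {G : Type*} [Group G] [Fintype G] [DecidableEq G]
    (hpg : IsPGroup p G) (hcam : IsCamina G)
    (hcard : Fintype.card G = p ^ n)
    (hnil : (⊤ : Subgroup G).lowerCentralSeries 2 = ⊥ ∧ (⊤ : Subgroup G).lowerCentralSeries 1 ≠ ⊥)
    (hZ : Nat.card (Subgroup.center G) = p ^ k) :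
    Module.finrank ℂ (TerwAlg G) =
      (p ^ (n - k) + p ^ k - 1) * (p ^ (n - k) + p ^ k - 2) + p ^ n := by
  classical
  -- Step 1: the commutator subgroup is the center.
  have hcomm_le : commutator G ≤ Subgroup.center G := by
    intro g hg
    rw [Subgroup.mem_center_iff]
    intro h
    have hmem : ⁅g, h⁆ ∈ (⊤ : Subgroup G).lowerCentralSeries 2 := by
      rw [show (2 : ℕ) = 1 + 1 from rfl, Subgroup.lowerCentralSeries_succ]
      exact Subgroup.commutator_mem_commutator
        (by rw [Subgroup.top_lowerCentralSeries_one]; exact hg) (Subgroup.mem_top h)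
    rw [hnil.1, Subgroup.mem_bot] at hmem
    exact (commutatorElement_eq_one_iff_mul_comm.mp hmem).symm
  have hcenter_le : Subgroup.center G ≤ commutator G := by
    intro z hz
    by_contra hzc
    have hclass := hcam.2 z hzc
    rw [conjClass_central hz] at hclass
    have hcomm_triv : ∀ w ∈ commutator G, w = (1 : G) := by
      intro w hw
      have hmem : z • w ∈ z • (commutator G : Set G) := Set.smul_mem_smul_set hw
      rw [← hclass] at hmem
      have : z * w = z := by
        have := Set.mem_singleton_iff.mp hmem
        rwa [smul_eq_mul] at this
      have : z * w = z * 1 := by rwa [mul_one]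
      exact mul_left_cancel this
    apply hcam.1
    intro a b
    have hab : ⁅a, b⁆ ∈ commutator G := by
      rw [commutator_def]
      exact Subgroup.commutator_mem_commutator (Subgroup.mem_top a) (Subgroup.mem_top b)
    exact commutatorElement_eq_one_iff_mul_comm.mp (hcomm_triv _ hab)
  have hZeq : commutator G = Subgroup.center G := le_antisymm hcomm_le hcenter_le
  -- Step 2: conjugacy classes of noncentral elements are cosets of the center.
  have hc : ∀ x : G, x ∉ Subgroup.center G →
      conjClass x = {w | w * x⁻¹ ∈ Subgroup.center G} := by
    intro x hx
    have h1 := hcam.2 x (by rw [hZeq]; exact hx)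
    rw [hZeq] at h1
    rw [h1]
    ext w
    simp only [Set.mem_setOf_eq]
    constructor
    · intro hw
      rw [Set.mem_smul_set] at hw
      obtain ⟨v, hv, rfl⟩ := hw
      rw [smul_eq_mul]
      have e : x * v * x⁻¹ = v := by rw [central_comm hv x]; group
      rw [e]
      exact hv
    · intro hw
      rw [Set.mem_smul_set]
      refine ⟨w * x⁻¹, hw, ?_⟩
      rw [smul_eq_mul, central_comm hw x]
      group
  -- Step 3: identify the Terwilliger algebra and its dimension.
  rw [terwAlg_eq_cellAlg hc, finrank_cellAlg hc, card_quotient_eq_card_cellType hc]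
  -- Step 4: counting.
  haveI : Finite (G ⧸ Subgroup.center G) := Quotient.finite _
  have hq : Nat.card {a : G ⧸ Subgroup.center G // a ≠ 1} + 1
      = Nat.card (G ⧸ Subgroup.center G) := card_ne_one _
  have hD := card_ne_subtype {a : G ⧸ Subgroup.center G // a ≠ 1}
  have hlag : Nat.card (G ⧸ Subgroup.center G) * Nat.card (Subgroup.center G) = p ^ n := by
    rw [← Subgroup.card_eq_card_quotient_mul_card_subgroup, Nat.card_eq_fintype_card, hcard]
  have hk : k ≤ n := by
    have hdvd : p ^ k ∣ p ^ n := ⟨Nat.card (G ⧸ Subgroup.center G), by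
      rw [← hZ, mul_comm]; exact hlag.symm⟩
    exact (Nat.pow_dvd_pow_iff_le_right hp.one_lt).mp hdvd
  have hqval : Nat.card (G ⧸ Subgroup.center G) = p ^ (n - k) := by
    have h1 : p ^ (n - k) * p ^ k = p ^ n := by rw [← pow_add, Nat.sub_add_cancel hk]
    have h2 : Nat.card (G ⧸ Subgroup.center G) * p ^ k = p ^ n := by rw [← hZ]; exact hlag
    exact Nat.eq_of_mul_eq_mul_right (pow_pos hp.pos k) (h2.trans h1.symm)
  have hs1 : 1 ≤ Nat.card (Subgroup.center G) := by
    rw [hZ]; exact Nat.one_le_pow _ _ hp.pos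
  rw [← hqval, ← hZ, ← hlag, ← hq]
  -- card of the cell type
  have hct : Nat.card (cellType G) =
      Nat.card ↥(Subgroup.center G) * Nat.card ↥(Subgroup.center G) +
      (Nat.card ↥(Subgroup.center G) * Nat.card {a : G ⧸ Subgroup.center G // a ≠ 1} +
      (Nat.card {a : G ⧸ Subgroup.center G // a ≠ 1} * Nat.card ↥(Subgroup.center G) +
      (Nat.card {q : {a : G ⧸ Subgroup.center G // a ≠ 1} ×
          {a : G ⧸ Subgroup.center G // a ≠ 1} // q.1 ≠ q.2} +
       Nat.card {a : G ⧸ Subgroup.center G // a ≠ 1} * Nat.card ↥(Subgroup.center G)))) := by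
    simp only [Nat.card_sum, Nat.card_prod]
  rw [hct]
  exact final_arith _ _ _ hD hs1
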